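/- Let P ⊆ ℝᵐ be an integral affine polytope and let S be a subset of A(P) which contains 0, is closed under addition, and is disjoint from A⁺(P) (equivalently: every element of S, being nonnegative on P, has at least one zero in P). Then the elements of S have a common zero: there exists a point x ∈ P with f(x) = 0 for every f ∈ S. -/

import Mathlib

/-- An integral affine function on `ℝᵐ`. -/
def IntegralAffine (m : ℕ) (f : (Fin m → ℝ) → ℝ) : Prop :=
  ∃ (n : Fin m → ℤ) (y : ℝ), f = fun x => (∑ i, (n i : ℝ) * x i) + y

/-- `A(P)`: integral affine functions nonnegative on `P`. -/
def affNonneg (m : ℕ) (P : Set (Fin m → ℝ)) : Set ((Fin m → ℝ) → ℝ) :=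
  {f | IntegralAffine m f ∧ ∀ x ∈ P, 0 ≤ f x}

/-- `A⁺(P)`: integral affine functions strictly positive on `P`. -/
def affPos (m : ℕ) (P : Set (Fin m → ℝ)) : Set ((Fin m → ℝ) → ℝ) :=
  {f | IntegralAffine m f ∧ ∀ x ∈ P, 0 < f x}

/-- An integral affine polytope: a nonempty finite intersection of sets
`{f ≥ 0}` or `{f > 0}` with `f` integral affine. -/
def IsIntegralAffinePolytope (m : ℕ) (P : Set (Fin m → ℝ)) : Prop :=
  P.Nonempty ∧ ∃ (k : ℕ) (f : Fin k → ((Fin m → ℝ) → ℝ)) (strict : Fin k → Bool),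
    (∀ i, IntegralAffine m (f i)) ∧
    P = {x | ∀ i, if strict i then 0 < f i x else 0 ≤ f i x}

lemma integralAffine_affineMap {m : ℕ} {f : (Fin m → ℝ) → ℝ} (hf : IntegralAffine m f) :
    ∃ A : (Fin m → ℝ) →ᵃ[ℝ] ℝ, ⇑A = f := by
  obtain ⟨n, y, rfl⟩ := hf
  refine ⟨(∑ i, (n i : ℝ) • LinearMap.proj i : (Fin m → ℝ) →ₗ[ℝ] ℝ).toAffineMap
    + AffineMap.const ℝ _ y, ?_⟩
  ext x
  simp [LinearMap.sum_apply, LinearMap.smul_apply, LinearMap.proj_apply, smul_eq_mul]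

/-- An integral affine function vanishing on a set vanishes on its affine span. -/
lemma integralAffine_vanish_span {m : ℕ} {f : (Fin m → ℝ) → ℝ} (hf : IntegralAffine m f)
    {s : Set (Fin m → ℝ)} (h : ∀ x ∈ s, f x = 0) :
    ∀ x ∈ affineSpan ℝ s, f x = 0 := by
  obtain ⟨A, hA⟩ := integralAffine_affineMap hf
  subst hA
  have hle : affineSpan ℝ s ≤ AffineSubspace.comap A (AffineSubspace.mk' (0 : ℝ) ⊥) := by
    rw [affineSpan_le]
    intro x hx
    have : A x ∈ AffineSubspace.mk' (0 : ℝ) (⊥ : Submodule ℝ ℝ) := by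
      rw [AffineSubspace.mem_mk']
      simp [h x hx]
    exact this
  intro x hx
  have := hle hx
  rw [AffineSubspace.mem_comap, AffineSubspace.mem_mk'] at this
  simpa using this

/-- A subset of `A(P)` containing `0`, closed under addition, and disjoint
from `A⁺(P)` has a common zero on `P`. -/
theorem common_zero_of_submonoid (m : ℕ) (P : Set (Fin m → ℝ))
    (hP : IsIntegralAffinePolytope m P)
    (S : Set ((Fin m → ℝ) → ℝ)) (hS : S ⊆ affNonneg m P)
    (h0 : (0 : (Fin m → ℝ) → ℝ) ∈ S)
    (hadd : ∀ f ∈ S, ∀ g ∈ S, f + g ∈ S)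
    (hdisj : ∀ f ∈ S, f ∉ affPos m P) :
    ∃ x ∈ P, ∀ f ∈ S, f x = 0 := by
  classical
  -- every element of S has a zero on P
  have hne : ∀ f ∈ S, ∃ x ∈ P, f x = 0 := by
    intro f hf
    have h1 := hS hf
    have h2 := hdisj f hf
    rw [affPos, Set.mem_setOf_eq, not_and] at h2
    push_neg at h2
    obtain ⟨x, hxP, hx⟩ := h2 h1.1
    exact ⟨x, hxP, le_antisymm hx (h1.2 x hxP)⟩
  set Z : ((Fin m → ℝ) → ℝ) → Set (Fin m → ℝ) := fun f => {x | x ∈ P ∧ f x = 0} with hZ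
  set d : ((Fin m → ℝ) → ℝ) → ℕ :=
    fun f => Module.finrank ℝ (affineSpan ℝ (Z f)).direction with hd
  -- choose f₀ ∈ S minimizing d
  obtain ⟨n0, ⟨f₀, hf₀S, hdf₀⟩, hminn⟩ :=
    (wellFounded_lt (α := ℕ)).has_min (d '' S) ⟨d 0, 0, h0, rfl⟩
  have hmin : ∀ g ∈ S, d f₀ ≤ d g := by
    intro g hgS
    rw [hdf₀]
    by_contra hlt
    exact hminn (d g) ⟨g, hgS, rfl⟩ (by omega)
  obtain ⟨x₀, hx₀P, hx₀⟩ := hne f₀ hf₀S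
  refine ⟨x₀, hx₀P, fun g hgS => ?_⟩
  have hsumS := hadd f₀ hf₀S g hgS
  -- the zero set of f₀ + g is contained in zero sets of both f₀ and g
  have hsub : Z (f₀ + g) ⊆ Z f₀ ∩ Z g := by
    rintro x ⟨hxP, hx⟩
    have h1 := (hS hf₀S).2 x hxP
    have h2 := (hS hgS).2 x hxP
    have hx' : f₀ x + g x = 0 := hx
    exact ⟨⟨hxP, by linarith⟩, ⟨hxP, by linarith⟩⟩
  obtain ⟨x₁, hx₁P, hx₁⟩ := hne _ hsumS
  have hx₁Z : x₁ ∈ Z (f₀ + g) := ⟨hx₁P, hx₁⟩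
  have hspan : affineSpan ℝ (Z (f₀ + g)) ≤ affineSpan ℝ (Z f₀) :=
    affineSpan_mono ℝ (fun x hx => (hsub hx).1)
  have hdir : (affineSpan ℝ (Z (f₀ + g))).direction = (affineSpan ℝ (Z f₀)).direction := by
    apply Submodule.eq_of_le_of_finrank_le (AffineSubspace.direction_le hspan)
    exact hmin _ hsumS
  have hspaneq : affineSpan ℝ (Z (f₀ + g)) = affineSpan ℝ (Z f₀) := by
    refine AffineSubspace.ext_of_direction_eq hdir ⟨x₁, ?_, ?_⟩
    · exact subset_affineSpan ℝ _ hx₁Z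
    · exact subset_affineSpan ℝ _ ((hsub hx₁Z).1)
  -- g vanishes on affineSpan (Z (f₀ + g)), which contains x₀
  have hx₀mem : x₀ ∈ affineSpan ℝ (Z (f₀ + g)) := by
    rw [hspaneq]
    exact subset_affineSpan ℝ _ ⟨hx₀P, hx₀⟩
  exact integralAffine_vanish_span (hS hgS).1 (fun x hx => (hsub hx).2.2) x₀ hx₀mem
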